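/- Online ridge leverage score determinant growth: let A be an n×d real matrix with rows a₁,…,aₙ, let Aᵢ denote the matrix of the first i rows, λ > 0, and lᵢ := min(aᵢᵀ (Aᵢ₋₁ᵀAᵢ₋₁ + λI)⁻¹ aᵢ, 1). Then det(Aᵢᵀ Aᵢ + λI) ≥ det(Aᵢ₋₁ᵀAᵢ₋₁ + λI) · (1 + lᵢ). -/

import Mathlib

open Matrix

/-- The matrix of the first `k` rows of `A`. -/
def firstRows {n d : ℕ} (A : Matrix (Fin n) (Fin d) ℝ) (k : ℕ) (h : k ≤ n) :
    Matrix (Fin k) (Fin d) ℝ := fun i j => A (Fin.castLE h i) j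

lemma smul_one_posDef {d : ℕ} {lam : ℝ} (hlam : 0 < lam) :
    (lam • (1 : Matrix (Fin d) (Fin d) ℝ)).PosDef := by
  refine Matrix.PosDef.of_dotProduct_mulVec_pos ?_ ?_
  · simp [Matrix.IsHermitian, Matrix.conjTranspose_smul]
  · intro x hx
    have : (lam • (1 : Matrix (Fin d) (Fin d) ℝ)) *ᵥ x = lam • x := by
      simp [Matrix.smul_mulVec]
    rw [this]
    simp only [dotProduct_smul, smul_eq_mul]
    have hxx : 0 < star x ⬝ᵥ x := by
      simpa using Matrix.dotProduct_star_self_pos_iff.mpr hx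
    exact mul_pos hlam hxx

theorem online_determinant_growth {n d : ℕ} (A : Matrix (Fin n) (Fin d) ℝ)
    (lam : ℝ) (hlam : 0 < lam) (i : Fin n) :
    ((firstRows A (i + 1) i.2)ᵀ * firstRows A (i + 1) i.2 +
        lam • (1 : Matrix (Fin d) (Fin d) ℝ)).det ≥
      ((firstRows A i i.2.le)ᵀ * firstRows A i i.2.le +
          lam • (1 : Matrix (Fin d) (Fin d) ℝ)).det *
        (1 + min (A i ⬝ᵥ ((firstRows A i i.2.le)ᵀ * firstRows A i i.2.le +
            lam • (1 : Matrix (Fin d) (Fin d) ℝ))⁻¹.mulVec (A i)) 1) := by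
  set M : Matrix (Fin d) (Fin d) ℝ :=
    (firstRows A i i.2.le)ᵀ * firstRows A i i.2.le + lam • (1 : Matrix (Fin d) (Fin d) ℝ) with hMdef
  set a : Fin d → ℝ := A i with ha
  have hM : M.PosDef := by
    refine Matrix.PosDef.posSemidef_add ?_ (smul_one_posDef hlam)
    have := Matrix.posSemidef_conjTranspose_mul_self (firstRows A i i.2.le)
    simpa using this
  -- Step 1: the (i+1)-row Gram matrix is M + col a * row a
  have hsplit : (firstRows A (i + 1) i.2)ᵀ * firstRows A (i + 1) i.2 +
      lam • (1 : Matrix (Fin d) (Fin d) ℝ) = M + replicateCol (Fin 1) a * replicateRow (Fin 1) a := by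
    rw [hMdef]
    have key : (firstRows A (i + 1) i.2)ᵀ * firstRows A (i + 1) i.2 =
        (firstRows A i i.2.le)ᵀ * firstRows A i i.2.le + replicateCol (Fin 1) a * replicateRow (Fin 1) a := by
      ext j k
      simp only [Matrix.mul_apply, Matrix.transpose_apply, Matrix.add_apply,
        Matrix.replicateCol_apply, Matrix.replicateRow_apply, firstRows]
      rw [Fin.sum_univ_castSucc]
      simp [Fin.castLE, Fin.castSucc, ha]
    rw [key]; abel
  rw [hsplit]
  have key2 : (M + replicateCol (Fin 1) a * replicateRow (Fin 1) a).det = M.det * (1 + a ⬝ᵥ M⁻¹ *ᵥ a) := by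
    have hMu : IsUnit M.det := hM.det_pos.ne'.isUnit
    have hfac : M + replicateCol (Fin 1) a * replicateRow (Fin 1) a
        = M * (1 + M⁻¹ * (replicateCol (Fin 1) a * replicateRow (Fin 1) a)) := by
      rw [Matrix.mul_add, Matrix.mul_one, Matrix.mul_nonsing_inv_cancel_left M _ hMu]
    rw [hfac, Matrix.det_mul]
    congr 1
    rw [← Matrix.mul_assoc, Matrix.det_one_add_mul_comm (M⁻¹ * replicateCol (Fin 1) a) (replicateRow (Fin 1) a)]
    rw [Matrix.det_fin_one]
    simp only [Matrix.add_apply, Matrix.one_apply_eq, Matrix.mul_apply, Matrix.replicateCol_apply,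
      Matrix.replicateRow_apply, dotProduct, Matrix.mulVec, Finset.mul_sum, Finset.sum_mul]
  rw [key2]
  have hq : 0 ≤ a ⬝ᵥ M⁻¹.mulVec a := by
    have := hM.inv.posSemidef.dotProduct_mulVec_nonneg a
    simpa using this
  have hdetpos : 0 < M.det := hM.det_pos
  apply mul_le_mul_of_nonneg_left _ hdetpos.le
  have : min (a ⬝ᵥ M⁻¹.mulVec a) 1 ≤ a ⬝ᵥ M⁻¹.mulVec a := min_le_left _ _
  linarith
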